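/- If φ : B₀ → B is a non-expansive homomorphism of seminormed commutative rings whose image is dense in B (for the semimetric d(x,y) = |x − y|), then the Kähler seminorm on Ω_{B/B₀} is identically zero. -/

import Mathlib

open scoped NNReal TensorProduct

/-- A (nonarchimedean) seminorm on an additive group. -/
def IsGroupSeminorm {M : Type*} [AddCommGroup M] (f : M → ℝ≥0) : Prop :=
  f 0 = 0 ∧ ∀ x y : M, f (x - y) ≤ max (f x) (f y)

/-- A seminorm on a commutative ring. -/
def IsRingSeminorm {A : Type*} [CommRing A] (f : A → ℝ≥0) : Prop :=
  IsGroupSeminorm f ∧ f 1 = 1 ∧ ∀ x y : A, f (x * y) ≤ f x * f y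

/-- The Kähler seminorm on `Ω[B⁄A]` induced by a seminorm `vB` on `B`. -/
noncomputable def kahlerSeminorm (A B : Type*) [CommRing A] [CommRing B] [Algebra A B]
    (vB : B → ℝ≥0) (x : Ω[B⁄A]) : ℝ≥0 :=
  sInf { r | ∃ (n : ℕ) (c b : Fin n → B),
    x = ∑ i, c i • KaehlerDifferential.D A B (b i) ∧
    r = Finset.univ.sup fun i => vB (c i) * vB (b i) }

/-- If `φ : B₀ → B` is a non-expansive homomorphism of seminormed rings with dense image, then
the Kähler seminorm on `Ω_{B/B₀}` vanishes identically. -/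
theorem kahlerSeminorm_eq_zero_of_denseRange
    {B₀ B : Type*} [CommRing B₀] [CommRing B] [Algebra B₀ B]
    (vB₀ : B₀ → ℝ≥0) (vB : B → ℝ≥0)
    (hB₀ : IsRingSeminorm vB₀) (hB : IsRingSeminorm vB)
    (hnonexp : ∀ a : B₀, vB (algebraMap B₀ B a) ≤ vB₀ a)
    (hdense : ∀ (b : B) (ε : ℝ≥0), 0 < ε → ∃ a : B₀, vB (b - algebraMap B₀ B a) < ε) :
    ∀ x : Ω[B⁄B₀], kahlerSeminorm B₀ B vB x = 0 := by
  intro x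
  have hrep : ∃ (n : ℕ) (c b : Fin n → B),
      x = ∑ i, c i • KaehlerDifferential.D B₀ B (b i) := by
    have hx : x ∈ Submodule.span B (Set.range (KaehlerDifferential.D B₀ B)) := by
      rw [KaehlerDifferential.span_range_derivation]; trivial
    induction hx using Submodule.span_induction with
    | mem y hy =>
        obtain ⟨b, rfl⟩ := hy
        exact ⟨1, fun _ => 1, fun _ => b, by simp⟩
    | zero => exact ⟨0, ![], ![], by simp⟩
    | add y z _ _ hy hz =>
        obtain ⟨n, c, b, rfl⟩ := hy
        obtain ⟨m, c', b', rfl⟩ := hz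
        refine ⟨n + m, Fin.append c c', Fin.append b b', ?_⟩
        rw [Fin.sum_univ_add]
        simp
    | smul r y _ hy =>
        obtain ⟨n, c, b, rfl⟩ := hy
        exact ⟨n, fun i => r * c i, b, by simp [Finset.smul_sum, smul_smul]⟩
  obtain ⟨n, c, b, hx⟩ := hrep
  refine le_antisymm (le_of_forall_gt_imp_ge_of_dense fun ε hε => ?_) zero_le
  set C := Finset.univ.sup (fun i : Fin n => vB (c i)) with hC
  have hδ : 0 < ε / (C + 1) := by positivity
  choose a ha using fun i => hdense (b i) (ε / (C + 1)) hδ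
  have hmem : (Finset.univ.sup fun i => vB (c i) * vB (b i - algebraMap B₀ B (a i))) ∈
      { r | ∃ (m : ℕ) (c' b' : Fin m → B),
        x = ∑ i, c' i • KaehlerDifferential.D B₀ B (b' i) ∧
        r = Finset.univ.sup fun i => vB (c' i) * vB (b' i) } := by
    refine ⟨n, c, fun i => b i - algebraMap B₀ B (a i), ?_, rfl⟩
    rw [hx]; simp [map_sub, Derivation.map_algebraMap]
  refine (csInf_le (OrderBot.bddBelow _) hmem).trans ?_
  apply Finset.sup_le
  intro i _
  calc vB (c i) * vB (b i - algebraMap B₀ B (a i))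
      ≤ C * (ε / (C + 1)) :=
        mul_le_mul' (Finset.le_sup (f := fun j => vB (c j)) (Finset.mem_univ i)) (le_of_lt (ha i))
    _ ≤ (C + 1) * (ε / (C + 1)) := by gcongr; exact le_self_add
    _ = ε := mul_div_cancel₀ _ (by positivity)
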